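/- Under these hypotheses, for every N ≥ 1 and all x, y ∈ X, one has ρ(Φᴺ(x), Φᴺ(y))² ≤ (Cᴺ Tᴺ / N!) · ρ(x,y)², where Φᴺ denotes the N-fold composition of Φ. -/

import Mathlib

open MeasureTheory Set

/-- In a nonempty complete metric space `(X, ρ)`, given a monotone family of
pseudometrics `D_t`, `t ∈ [0,T]`, with `D_T = ρ`, and a map `Φ` satisfying
`D_t(Φ x, Φ y)² ≤ C ∫₀ᵗ D_s(x,y)² ds`, one has, for all `N ≥ 1`,
`ρ(Φᴺ x, Φᴺ y)² ≤ (Cᴺ Tᴺ / N!) ρ(x,y)²`. -/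
theorem stmt2 {X : Type*} [MetricSpace X] [CompleteSpace X] [Nonempty X]
    (T : ℝ) (hT : 0 < T) (C : ℝ) (hC : 0 ≤ C)
    (D : ℝ → X → X → ℝ)
    (hD_nonneg : ∀ t ∈ Icc (0 : ℝ) T, ∀ x y, 0 ≤ D t x y)
    (hD_refl : ∀ t ∈ Icc (0 : ℝ) T, ∀ x, D t x x = 0)
    (hD_symm : ∀ t ∈ Icc (0 : ℝ) T, ∀ x y, D t x y = D t y x)
    (hD_tri : ∀ t ∈ Icc (0 : ℝ) T, ∀ x y z, D t x z ≤ D t x y + D t y z)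
    (hD_mono : ∀ s t : ℝ, 0 ≤ s → s ≤ t → t ≤ T → ∀ x y, D s x y ≤ D t x y)
    (hD_top : ∀ x y, D T x y = dist x y)
    (hD_meas : ∀ x y, Measurable fun t => D t x y)
    (Φ : X → X)
    (hΦ : ∀ t ∈ Icc (0 : ℝ) T, ∀ x y,
      (D t (Φ x) (Φ y)) ^ 2 ≤ C * ∫ s in (0 : ℝ)..t, (D s x y) ^ 2) :
    ∀ N : ℕ, 1 ≤ N → ∀ x y : X,
      (dist (Φ^[N] x) (Φ^[N] y)) ^ 2
        ≤ (C ^ N * T ^ N / (Nat.factorial N : ℝ)) * (dist x y) ^ 2 := by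
  -- integrability of s ↦ (D s a b)^2 on [0,t]
  have hint : ∀ t ∈ Icc (0 : ℝ) T, ∀ a b : X,
      IntervalIntegrable (fun s => (D s a b) ^ 2) volume 0 t := by
    intro t ht a b
    rw [intervalIntegrable_iff_integrableOn_Ioc_of_le ht.1]
    refine Measure.integrableOn_of_bounded (M := (dist a b) ^ 2)
      measure_Ioc_lt_top.ne (((hD_meas a b).pow_const 2).aestronglyMeasurable) ?_
    filter_upwards [ae_restrict_mem measurableSet_Ioc] with s hs
    have hs0 : (0:ℝ) ≤ s := le_of_lt hs.1
    have hsT : s ≤ T := hs.2.trans ht.2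
    have h1 : D s a b ≤ dist a b := by
      rw [← hD_top a b]; exact hD_mono s T hs0 hsT le_rfl a b
    have h0 : 0 ≤ D s a b := hD_nonneg s ⟨hs0, hsT⟩ a b
    rw [Real.norm_of_nonneg (by positivity)]
    exact pow_le_pow_left₀ h0 h1 2
  have key : ∀ N : ℕ, ∀ t ∈ Icc (0 : ℝ) T, ∀ x y : X,
      (D t (Φ^[N] x) (Φ^[N] y)) ^ 2
        ≤ (C ^ N * t ^ N / (Nat.factorial N : ℝ)) * (dist x y) ^ 2 := by
    intro N
    induction N with
    | zero =>
      intro t ht x y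
      simp only [Function.iterate_zero_apply, pow_zero, Nat.factorial_zero, Nat.cast_one,
        one_mul, mul_one, div_one]
      have h1 : D t x y ≤ dist x y := by
        rw [← hD_top x y]; exact hD_mono t T ht.1 ht.2 le_rfl x y
      exact pow_le_pow_left₀ (hD_nonneg t ht x y) h1 2
    | succ n ih =>
      intro t ht x y
      have h1 := hΦ t ht (Φ^[n] x) (Φ^[n] y)
      rw [Function.iterate_succ_apply', Function.iterate_succ_apply']
      refine h1.trans ?_
      have hmono : (∫ s in (0:ℝ)..t, (D s (Φ^[n] x) (Φ^[n] y)) ^ 2)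
          ≤ ∫ s in (0:ℝ)..t, (C ^ n * s ^ n / (Nat.factorial n : ℝ)) * (dist x y) ^ 2 := by
        apply intervalIntegral.integral_mono_on ht.1 (hint t ht _ _)
        · apply IntervalIntegrable.mul_const
          apply Continuous.intervalIntegrable; continuity
        · intro s hs
          exact ih s ⟨hs.1, hs.2.trans ht.2⟩ x y
      have hval : (∫ s in (0:ℝ)..t, (C ^ n * s ^ n / (Nat.factorial n : ℝ)) * (dist x y) ^ 2)
          = (C ^ n * t ^ (n+1) / ((Nat.factorial n : ℝ) * (n+1))) * (dist x y) ^ 2 := by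
        rw [intervalIntegral.integral_mul_const]
        have : (∫ s in (0:ℝ)..t, C ^ n * s ^ n / (Nat.factorial n : ℝ))
            = (C ^ n / (Nat.factorial n : ℝ)) * ∫ s in (0:ℝ)..t, s ^ n := by
          rw [← intervalIntegral.integral_const_mul]
          congr 1; ext s; ring
        rw [this, integral_pow]
        field_simp
        rw [zero_pow (Nat.succ_ne_zero n), sub_zero]
      calc C * ∫ s in (0:ℝ)..t, (D s (Φ^[n] x) (Φ^[n] y)) ^ 2
          ≤ C * ((C ^ n * t ^ (n+1) / ((Nat.factorial n : ℝ) * (n+1))) * (dist x y) ^ 2) := by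
            rw [← hval]; exact mul_le_mul_of_nonneg_left hmono hC
        _ = (C ^ (n+1) * t ^ (n+1) / (Nat.factorial (n+1) : ℝ)) * (dist x y) ^ 2 := by
            rw [Nat.factorial_succ]
            push_cast
            ring
  intro N _ x y
  have := key N T ⟨le_of_lt hT, le_rfl⟩ x y
  rwa [hD_top] at this
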